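/- Let T, S ∈ B_{A^{1/2}}(H) and λ ∈ [0,1]. If T is (A,λ)-Birkhoff–James orthogonal to S, i.e. ‖T + ξS‖_{(A,λ)} ≥ ‖T‖_{(A,λ)} for all ξ ∈ ℂ, then for each θ ∈ [0, 2π) there exists a sequence {x_n} of A-unit vectors such that lim_{n→∞}( λ‖Tx_n‖_A² + (1−λ)|⟨Tx_n,x_n⟩_A|² ) = ‖T‖_{(A,λ)}² and liminf_{n→∞} Re( e^{iθ}λ⟨Sx_n, Tx_n⟩_A + e^{iθ}(1−λ)⟨x_n, Tx_n⟩_A⟨Sx_n, x_n⟩_A ) ≥ 0. -/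

import Mathlib

open Filter Topology

variable {H : Type*}

/-- The `A`-semi-inner product, paper convention (linear in the first argument):
`⟨x, y⟩_A = ⟨Ax, y⟩`. -/
noncomputable def innA [NormedAddCommGroup H] [InnerProductSpace ℂ H]
    (A : H →L[ℂ] H) (x y : H) : ℂ :=
  @inner ℂ H _ y (A x)

/-- The seminorm `‖x‖_A = √⟨Ax, x⟩`. -/
noncomputable def normA [NormedAddCommGroup H] [InnerProductSpace ℂ H]
    (A : H →L[ℂ] H) (x : H) : ℝ :=
  Real.sqrt (innA A x x).re

/-- The quantity `√(λ‖Tx‖_A² + (1−λ)|⟨Tx,x⟩_A|²)`. -/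
noncomputable def qA [NormedAddCommGroup H] [InnerProductSpace ℂ H]
    (A : H →L[ℂ] H) (l : ℝ) (T : H →L[ℂ] H) (x : H) : ℝ :=
  Real.sqrt (l * normA A (T x) ^ 2 + (1 - l) * ‖innA A (T x) x‖ ^ 2)

/-- The seminorm `‖T‖_{(A,λ)}`. -/
noncomputable def semNormA [NormedAddCommGroup H] [InnerProductSpace ℂ H]
    (A : H →L[ℂ] H) (l : ℝ) (T : H →L[ℂ] H) : ℝ :=
  sSup {r : ℝ | ∃ x : H, normA A x = 1 ∧ r = qA A l T x}

section lems
set_option linter.unusedSectionVars false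
variable [NormedAddCommGroup H] [InnerProductSpace ℂ H] [CompleteSpace H]
  {A : H →L[ℂ] H}

lemma innA_symm (hA : A.IsPositive) (x y : H) :
    @inner ℂ H _ (A x) y = @inner ℂ H _ x (A y) :=
  hA.1 x y

lemma innA_conj (hA : A.IsPositive) (x y : H) :
    (starRingEnd ℂ) (innA A x y) = innA A y x := by
  rw [innA, innA, inner_conj_symm, innA_symm hA]

lemma innA_self_nonneg (hA : A.IsPositive) (x : H) : 0 ≤ (innA A x x).re := by
  simpa [innA] using hA.re_inner_nonneg_right x

lemma normA_nonneg (x : H) : 0 ≤ normA A x := Real.sqrt_nonneg _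

lemma normA_sq (hA : A.IsPositive) (x : H) : normA A x ^ 2 = (innA A x x).re :=
  Real.sq_sqrt (innA_self_nonneg hA x)

lemma innA_add_left (x y z : H) : innA A (x + y) z = innA A x z + innA A y z := by
  simp [innA, inner_add_right]

lemma innA_smul_left (c : ℂ) (x z : H) : innA A (c • x) z = c * innA A x z := by
  simp [innA, inner_smul_right]

lemma innA_add_right (x y z : H) : innA A x (y + z) = innA A x y + innA A x z := by
  simp [innA, inner_add_left]

lemma innA_smul_right (c : ℂ) (x z : H) :
    innA A x (c • z) = (starRingEnd ℂ) c * innA A x z := by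
  simp [innA, inner_smul_left]; ring

lemma normA_add_smul_sq (hA : A.IsPositive) (ξ : ℂ) (u s : H) :
    normA A (u + ξ • s) ^ 2 =
      normA A u ^ 2 + 2 * (ξ * innA A s u).re + Complex.normSq ξ * normA A s ^ 2 := by
  have hexp : innA A (u + ξ • s) (u + ξ • s) =
      innA A u u + ξ * innA A s u + (starRingEnd ℂ) (ξ * innA A s u)
        + (Complex.normSq ξ : ℂ) * innA A s s := by
    rw [innA_add_left, innA_add_right, innA_add_right, innA_smul_left, innA_smul_left,
      innA_smul_right, innA_smul_right]
    rw [map_mul, innA_conj hA s u, ← Complex.mul_conj]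
    ring
  rw [normA_sq hA, normA_sq hA, normA_sq hA, hexp]
  simp [Complex.add_re, Complex.conj_re, Complex.re_ofReal_mul]
  ring

lemma abs_add_mul_sq (ξ α β : ℂ) :
    ‖α + ξ * β‖ ^ 2 = ‖α‖ ^ 2
      + 2 * (ξ * β * (starRingEnd ℂ) α).re + Complex.normSq ξ * ‖β‖ ^ 2 := by
  rw [← Complex.normSq_eq_norm_sq, ← Complex.normSq_eq_norm_sq, ← Complex.normSq_eq_norm_sq,
    Complex.normSq_add]
  simp only [Complex.normSq_apply, Complex.mul_re, Complex.mul_im, Complex.conj_re,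
    Complex.conj_im, Complex.add_re, Complex.add_im]
  ring

lemma qA_expand (hA : A.IsPositive) (l : ℝ) (ξ : ℂ) (T S : H →L[ℂ] H) (x : H) :
    l * normA A ((T + ξ • S) x) ^ 2
      + (1 - l) * ‖innA A ((T + ξ • S) x) x‖ ^ 2
    = (l * normA A (T x) ^ 2 + (1 - l) * ‖innA A (T x) x‖ ^ 2)
      + 2 * ((ξ * ((l : ℂ) * innA A (S x) (T x)
          + (1 - (l : ℂ)) * innA A x (T x) * innA A (S x) x)).re)
      + Complex.normSq ξ
          * (l * normA A (S x) ^ 2 + (1 - l) * ‖innA A (S x) x‖ ^ 2) := by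
  have happ : (T + ξ • S) x = T x + ξ • S x := rfl
  rw [happ, normA_add_smul_sq hA, innA_add_left, innA_smul_left, abs_add_mul_sq,
    ← innA_conj hA (T x) x]
  set a := innA A (S x) (T x)
  set b := innA A (T x) x
  set c := innA A (S x) x
  have : (ξ * ((l : ℂ) * a + (1 - (l : ℂ)) * (starRingEnd ℂ) b * c)).re
      = l * (ξ * a).re + (1 - l) * (ξ * c * (starRingEnd ℂ) b).re := by
    simp only [Complex.mul_re, Complex.mul_im, Complex.add_re, Complex.add_im,
      Complex.sub_re, Complex.sub_im, Complex.ofReal_re, Complex.ofReal_im,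
      Complex.one_re, Complex.one_im, Complex.conj_re, Complex.conj_im]
    ring
  rw [this]
  ring
lemma abs_innA_le (hA : A.IsPositive) (x y : H) :
    ‖innA A x y‖ ≤ normA A x * normA A y := by
  let c : PreInnerProductSpace.Core ℂ H :=
    { inner := fun u v => @inner ℂ H _ u (A v)
      conj_inner_symm := fun u v => by
        simp only [inner_conj_symm, innA_symm hA]
      re_inner_nonneg := fun u => hA.re_inner_nonneg_right u
      add_left := fun u v w => by simp [inner_add_left]
      smul_left := fun u v r => by simp [inner_smul_left]; ring }
  have h : ‖@inner ℂ H _ x (A y)‖ * ‖@inner ℂ H _ y (A x)‖ ≤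
      RCLike.re (@inner ℂ H _ x (A x)) * RCLike.re (@inner ℂ H _ y (A y)) :=
    @InnerProductSpace.Core.inner_mul_inner_self_le ℂ H _ _ _ c x y
  have e1 : ‖@inner ℂ H _ y (A x)‖ = ‖innA A x y‖ := rfl
  have e2 : ‖@inner ℂ H _ x (A y)‖ = ‖innA A x y‖ := by
    have h5 := congrArg (fun z : ℂ => ‖z‖) (innA_conj hA y x)
    rw [Complex.norm_conj] at h5
    rw [show (‖@inner ℂ H _ x (A y)‖) = ‖innA A y x‖ from rfl, h5]
  have e3 : RCLike.re (@inner ℂ H _ x (A x)) = normA A x ^ 2 := by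
    rw [normA_sq hA]; rfl
  have e4 : RCLike.re (@inner ℂ H _ y (A y)) = normA A y ^ 2 := by
    rw [normA_sq hA]; rfl
  rw [e1, e2, e3, e4] at h
  nlinarith [norm_nonneg (innA A x y), normA_nonneg (A := A) x,
    normA_nonneg (A := A) y, mul_nonneg (normA_nonneg (A := A) x) (normA_nonneg (A := A) y)]
end lems

theorem exists_seq_of_BJ_orthogonal
    [NormedAddCommGroup H] [InnerProductSpace ℂ H] [CompleteSpace H]
    (A : H →L[ℂ] H) (hA : A.IsPositive) {l : ℝ} (hl : l ∈ Set.Icc (0 : ℝ) 1)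
    (T S : H →L[ℂ] H) (hT : BddAbove {r : ℝ | ∃ x : H, normA A x = 1 ∧ r = normA A (T x)}) (hS : BddAbove {r : ℝ | ∃ x : H, normA A x = 1 ∧ r = normA A (S x)})
    (hne : ∃ x : H, normA A x = 1)
    (horth : ∀ ξ : ℂ, semNormA A l T ≤ semNormA A l (T + ξ • S)) :
    ∀ θ ∈ Set.Ico (0 : ℝ) (2 * Real.pi),
      ∃ x : ℕ → H, (∀ n, normA A (x n) = 1) ∧
        Tendsto (fun n => l * normA A (T (x n)) ^ 2 + (1 - l) * ‖innA A (T (x n)) (x n)‖ ^ 2)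
          atTop (𝓝 (semNormA A l T ^ 2)) ∧
        0 ≤ Filter.liminf (fun n => (Complex.exp (θ * Complex.I) * ((l : ℂ) * innA A (S (x n)) (T (x n)) + ((1 : ℂ) - (l : ℂ)) * innA A (x n) (T (x n)) * innA A (S (x n)) (x n))).re) atTop := by
  obtain ⟨hl0, hl1⟩ := hl
  obtain ⟨x₀, hx₀⟩ := hne
  intro θ _
  set ζ : ℂ := Complex.exp (θ * Complex.I) with hζdef
  have hζ : ‖ζ‖ = 1 := Complex.norm_exp_ofReal_mul_I θ
  -- bounds
  set CT := sSup {r : ℝ | ∃ x : H, normA A x = 1 ∧ r = normA A (T x)} with hCT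
  set CS := sSup {r : ℝ | ∃ x : H, normA A x = 1 ∧ r = normA A (S x)} with hCS
  have hbT : ∀ x : H, normA A x = 1 → normA A (T x) ≤ CT := fun x hx => le_csSup hT ⟨x, hx, rfl⟩
  have hbS : ∀ x : H, normA A x = 1 → normA A (S x) ≤ CS := fun x hx => le_csSup hS ⟨x, hx, rfl⟩
  have hCT0 : 0 ≤ CT := le_trans (normA_nonneg _) (hbT x₀ hx₀)
  have hCS0 : 0 ≤ CS := le_trans (normA_nonneg _) (hbS x₀ hx₀)
  have habsT : ∀ x : H, normA A x = 1 → ‖innA A (T x) x‖ ≤ CT := by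
    intro x hx
    have h1 := abs_innA_le hA (T x) x
    rw [hx, mul_one] at h1
    exact h1.trans (hbT x hx)
  have habsS : ∀ x : H, normA A x = 1 → ‖innA A (S x) x‖ ≤ CS := by
    intro x hx
    have h1 := abs_innA_le hA (S x) x
    rw [hx, mul_one] at h1
    exact h1.trans (hbS x hx)
  -- qA generic facts
  have hqsq : ∀ (R : H →L[ℂ] H) (x : H), qA A l R x ^ 2
      = l * normA A (R x) ^ 2 + (1 - l) * ‖innA A (R x) x‖ ^ 2 := by
    intro R x
    refine Real.sq_sqrt ?_
    have := sq_nonneg (normA A (R x))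
    have := sq_nonneg (‖innA A (R x) x‖)
    nlinarith
  have hq0 : ∀ (R : H →L[ℂ] H) (x : H), 0 ≤ qA A l R x := fun R x => Real.sqrt_nonneg _
  have hqT : ∀ x : H, normA A x = 1 → qA A l T x ≤ CT := by
    intro x hx
    have h1 : l * normA A (T x) ^ 2 + (1 - l) * ‖innA A (T x) x‖ ^ 2 ≤ CT ^ 2 := by
      have ha2 : normA A (T x) ^ 2 ≤ CT ^ 2 :=
        pow_le_pow_left₀ (normA_nonneg _) (hbT x hx) 2
      have hb2 : ‖innA A (T x) x‖ ^ 2 ≤ CT ^ 2 :=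
        pow_le_pow_left₀ (norm_nonneg _) (habsT x hx) 2
      have := mul_le_mul_of_nonneg_left ha2 hl0
      have := mul_le_mul_of_nonneg_left hb2 (by linarith : (0:ℝ) ≤ 1 - l)
      linarith
    calc qA A l T x ≤ Real.sqrt (CT ^ 2) := Real.sqrt_le_sqrt h1
      _ = CT := Real.sqrt_sq hCT0
  set M := semNormA A l T with hM
  have hbddq : BddAbove {r : ℝ | ∃ x : H, normA A x = 1 ∧ r = qA A l T x} := by
    refine ⟨CT, ?_⟩
    rintro r ⟨x, hx, rfl⟩
    exact hqT x hx
  have hqM : ∀ x : H, normA A x = 1 → qA A l T x ≤ M := fun x hx => le_csSup hbddq ⟨x, hx, rfl⟩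
  have hM0 : 0 ≤ M := le_trans (hq0 T x₀) (hqM x₀ hx₀)
  -- the sequence
  set t : ℕ → ℝ := fun n => 1 / ((n : ℝ) + 1) with htdef
  have ht0 : ∀ n, 0 < t n := fun n => by positivity
  have key : ∀ n : ℕ, ∃ x : H, normA A x = 1 ∧
      M - t n ^ 2 ≤ qA A l (T + ((t n : ℂ) * ζ) • S) x := by
    intro n
    have h1 : M - t n ^ 2 < semNormA A l (T + ((t n : ℂ) * ζ) • S) := by
      refine lt_of_lt_of_le ?_ (horth _)
      have := ht0 n
      nlinarith
    have hne' : {r : ℝ | ∃ x : H, normA A x = 1 ∧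
        r = qA A l (T + ((t n : ℂ) * ζ) • S) x}.Nonempty :=
      ⟨qA A l (T + ((t n : ℂ) * ζ) • S) x₀, x₀, hx₀, rfl⟩
    have h1' : M - t n ^ 2 < sSup {r : ℝ | ∃ x : H, normA A x = 1 ∧
        r = qA A l (T + ((t n : ℂ) * ζ) • S) x} := h1
    obtain ⟨r, ⟨x, hx, rfl⟩, hr⟩ := exists_lt_of_lt_csSup hne' h1'
    exact ⟨x, hx, hr.le⟩
  choose x hx1 hx2 using key
  refine ⟨x, hx1, ?_⟩
  set p : ℕ → ℝ := fun n =>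
    l * normA A (T (x n)) ^ 2 + (1 - l) * ‖innA A (T (x n)) (x n)‖ ^ 2 with hpdef
  set g : ℕ → ℝ := fun n => (ζ * ((l : ℂ) * innA A (S (x n)) (T (x n))
      + ((1 : ℂ) - (l : ℂ)) * innA A (x n) (T (x n)) * innA A (S (x n)) (x n))).re with hgdef
  set hh : ℕ → ℝ := fun n =>
    l * normA A (S (x n)) ^ 2 + (1 - l) * ‖innA A (S (x n)) (x n)‖ ^ 2 with hhdef
  -- per-n key inequality
  have per_n : ∀ n, M ^ 2 - 2 * M * t n ^ 2 ≤ p n + 2 * t n * g n + t n ^ 2 * hh n := by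
    intro n
    have hq' := hqsq (T + ((t n : ℂ) * ζ) • S) (x n)
    rw [qA_expand hA l ((t n : ℂ) * ζ) T S (x n)] at hq'
    have hre : (((t n : ℂ) * ζ) * ((l : ℂ) * innA A (S (x n)) (T (x n))
        + (1 - (l : ℂ)) * innA A (x n) (T (x n)) * innA A (S (x n)) (x n))).re = t n * g n := by
      rw [hgdef, mul_assoc, Complex.re_ofReal_mul]
    have hns : Complex.normSq ((t n : ℂ) * ζ) = t n ^ 2 := by
      rw [Complex.normSq_mul, Complex.normSq_ofReal, Complex.normSq_eq_norm_sq, hζ]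
      ring
    rw [hre, hns] at hq'
    have hq'' : qA A l (T + ((t n : ℂ) * ζ) • S) (x n) ^ 2
        = p n + 2 * (t n * g n) + t n ^ 2 * hh n := hq'
    have hle1 : M - t n ^ 2 ≤ qA A l (T + ((t n : ℂ) * ζ) • S) (x n) := hx2 n
    have hle2 : 0 ≤ qA A l (T + ((t n : ℂ) * ζ) • S) (x n) := hq0 _ _
    rcases le_or_gt M (t n ^ 2) with hc | hc
    · nlinarith [mul_nonneg hM0 (by linarith : (0:ℝ) ≤ t n ^ 2 - M), sq_nonneg
        (qA A l (T + ((t n : ℂ) * ζ) • S) (x n))]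
    · nlinarith [mul_nonneg (by linarith : (0:ℝ) ≤ qA A l (T + ((t n : ℂ) * ζ) • S) (x n)
          - (M - t n ^ 2)) (by linarith : (0:ℝ) ≤ qA A l (T + ((t n : ℂ) * ζ) • S) (x n)
          + (M - t n ^ 2)), sq_nonneg (t n)]
  have pleM : ∀ n, p n ≤ M ^ 2 := by
    intro n
    have h1 : qA A l T (x n) ≤ M := hqM (x n) (hx1 n)
    have h2 : 0 ≤ qA A l T (x n) := hq0 _ _
    have h3 : qA A l T (x n) ^ 2 = p n := hqsq T (x n)
    nlinarith [mul_le_mul h1 h1 h2 hM0]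
  have gbound : ∀ n, |g n| ≤ CT * CS := by
    intro n
    have h1 : |g n| ≤ ‖ζ * ((l : ℂ) * innA A (S (x n)) (T (x n))
        + ((1 : ℂ) - (l : ℂ)) * innA A (x n) (T (x n)) * innA A (S (x n)) (x n))‖ :=
      Complex.abs_re_le_norm _
    rw [norm_mul, hζ, one_mul] at h1
    refine h1.trans ?_
    have h2 : ‖innA A (S (x n)) (T (x n))‖ ≤ CS * CT := by
      have := abs_innA_le hA (S (x n)) (T (x n))
      exact this.trans (mul_le_mul (hbS _ (hx1 n)) (hbT _ (hx1 n))
        (normA_nonneg _) hCS0)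
    have h3 : ‖innA A (x n) (T (x n))‖ ≤ CT := by
      have h4 := abs_innA_le hA (x n) (T (x n))
      rw [hx1 n, one_mul] at h4
      exact h4.trans (hbT _ (hx1 n))
    have h5 : ‖innA A (S (x n)) (x n)‖ ≤ CS := habsS _ (hx1 n)
    calc ‖(l : ℂ) * innA A (S (x n)) (T (x n))
        + ((1 : ℂ) - (l : ℂ)) * innA A (x n) (T (x n)) * innA A (S (x n)) (x n)‖
        ≤ ‖(l : ℂ) * innA A (S (x n)) (T (x n))‖
          + ‖((1 : ℂ) - (l : ℂ)) * innA A (x n) (T (x n)) * innA A (S (x n)) (x n)‖ :=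
          norm_add_le _ _
      _ = l * ‖innA A (S (x n)) (T (x n))‖
          + (1 - l) * (‖innA A (x n) (T (x n))‖ * ‖innA A (S (x n)) (x n)‖) := by
          rw [norm_mul, norm_mul, norm_mul]
          have e1 : ‖(l : ℂ)‖ = l := by
            rw [Complex.norm_real, Real.norm_eq_abs, abs_of_nonneg hl0]
          have e2 : ‖(1 : ℂ) - (l : ℂ)‖ = 1 - l := by
            rw [show ((1 : ℂ) - (l : ℂ)) = ((1 - l : ℝ) : ℂ) by push_cast; ring,
              Complex.norm_real, Real.norm_eq_abs, abs_of_nonneg (by linarith)]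
          rw [e1, e2]
          ring
      _ ≤ l * (CS * CT) + (1 - l) * (CT * CS) := by
          have hab2 := norm_nonneg (innA A (S (x n)) (x n))
          have hbc : ‖innA A (x n) (T (x n))‖ * ‖innA A (S (x n)) (x n)‖
              ≤ CT * CS := mul_le_mul h3 h5 hab2 hCT0
          have := mul_le_mul_of_nonneg_left h2 hl0
          have := mul_le_mul_of_nonneg_left hbc (by linarith : (0:ℝ) ≤ 1 - l)
          linarith
      _ = CT * CS := by ring
  have hhbound : ∀ n, 0 ≤ hh n ∧ hh n ≤ CS ^ 2 := by
    intro n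
    constructor
    · show (0:ℝ) ≤ l * normA A (S (x n)) ^ 2
        + (1 - l) * ‖innA A (S (x n)) (x n)‖ ^ 2
      have := sq_nonneg (normA A (S (x n)))
      have := sq_nonneg (‖innA A (S (x n)) (x n)‖)
      nlinarith
    · show l * normA A (S (x n)) ^ 2
        + (1 - l) * ‖innA A (S (x n)) (x n)‖ ^ 2 ≤ CS ^ 2
      have ha2 : normA A (S (x n)) ^ 2 ≤ CS ^ 2 :=
        pow_le_pow_left₀ (normA_nonneg _) (hbS _ (hx1 n)) 2
      have hb2 : ‖innA A (S (x n)) (x n)‖ ^ 2 ≤ CS ^ 2 :=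
        pow_le_pow_left₀ (norm_nonneg _) (habsS _ (hx1 n)) 2
      have := mul_le_mul_of_nonneg_left ha2 hl0
      have := mul_le_mul_of_nonneg_left hb2 (by linarith : (0:ℝ) ≤ 1 - l)
      linarith
  have tlim : Tendsto t atTop (𝓝 0) := tendsto_one_div_add_atTop_nhds_zero_nat
  have t2lim : Tendsto (fun n => t n ^ 2) atTop (𝓝 0) := by
    have h0 := tlim.pow 2
    rw [show (0:ℝ) ^ 2 = 0 by ring] at h0
    exact h0
  have ht1 : ∀ n, t n ≤ 1 := by
    intro n
    rw [htdef]
    rw [div_le_one (by positivity)]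
    simp
  clear_value ζ CT CS M t p g hh
  constructor
  · -- Tendsto p atTop (𝓝 (M ^ 2))
    have lower : ∀ n, M ^ 2 - (2 * M) * t n ^ 2 - (2 * (CT * CS)) * t n - CS ^ 2 * t n ^ 2 ≤ p n := by
      intro n
      have h1 := per_n n
      have h2 := (gbound n)
      have h3 := (hhbound n).2
      have h4 := (hhbound n).1
      have h5 := abs_le.mp h2
      have h6 := ht0 n
      nlinarith [sq_nonneg (t n)]
    have llim : Tendsto (fun n => M ^ 2 - (2 * M) * t n ^ 2 - (2 * (CT * CS)) * t n
        - CS ^ 2 * t n ^ 2) atTop (𝓝 (M ^ 2)) := by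
      have h0 := (((tendsto_const_nhds (x := M ^ 2) (f := atTop)).sub
        (t2lim.const_mul (2 * M))).sub (tlim.const_mul (2 * (CT * CS)))).sub
        (t2lim.const_mul (CS ^ 2))
      rw [show M ^ 2 - (2 * M) * 0 - (2 * (CT * CS)) * 0 - CS ^ 2 * 0 = M ^ 2 by ring] at h0
      exact h0
    exact tendsto_of_tendsto_of_tendsto_of_le_of_le llim tendsto_const_nhds lower pleM
  · -- liminf
    set K : ℝ := 2 * M + CS ^ 2 with hK
    have hK0 : 0 ≤ K := by
      have := sq_nonneg CS
      simp only [hK]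
      linarith
    clear_value K
    have glb : ∀ n, -(K * t n) ≤ g n := by
      intro n
      have h1 := per_n n
      have h2 := pleM n
      have h3 := (hhbound n).2
      have h6 := ht0 n
      have h3' : t n ^ 2 * hh n ≤ t n ^ 2 * CS ^ 2 :=
        mul_le_mul_of_nonneg_left h3 (sq_nonneg (t n))
      have hstep : 0 ≤ 2 * t n * g n + K * t n ^ 2 := by
        rw [hK]; linarith
      have h7 : 0 ≤ t n * (2 * g n + K * t n) := by linarith [hstep]
      have h7' : t n * 0 ≤ t n * (2 * g n + K * t n) := by rw [mul_zero]; exact h7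
      have hstep2 : 0 ≤ 2 * g n + K * t n := le_of_mul_le_mul_left h7' h6
      have h8 := mul_nonneg hK0 h6.le
      linarith
    have l1 : Tendsto (fun n => -(K * t n)) atTop (𝓝 0) := by
      have h0 := (tlim.const_mul K).neg
      rw [show -(K * (0:ℝ)) = 0 by ring] at h0
      exact h0
    have l2 : liminf (fun n => -(K * t n)) atTop = 0 := l1.liminf_eq
    have hmono : liminf (fun n => -(K * t n)) atTop ≤ liminf g atTop := by
      refine liminf_le_liminf (Filter.Eventually.of_forall glb) ?_ ?_
      · refine Filter.isBoundedUnder_of ⟨-(K * 1), fun n => ?_⟩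
        have := mul_le_mul_of_nonneg_left (ht1 n) hK0
        simp only [ge_iff_le]
        linarith
      · refine Filter.IsBoundedUnder.isCoboundedUnder_ge
          (Filter.isBoundedUnder_of ⟨CT * CS, fun n => ?_⟩)
        exact (abs_le.mp (gbound n)).2
    rw [l2] at hmono
    exact hmono
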